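/- The Tribonacci word t is 2-balanced: for all factors U and V of t of equal length and every letter a ∈ {0,1,2}, one has ||U|_a − |V|_a| ≤ 2. -/

import Mathlib

/-- The factor of the infinite word `ω` of length `n` starting at position `i`. -/
def factor {A : Type*} (ω : ℕ → A) (i n : ℕ) : List A :=
  (List.range n).map fun j => ω (i + j)

/-- `ω` is `C`-balanced: for every letter `a` and all factors of equal length,
the numbers of occurrences of `a` differ by at most `C`. -/
def IsCBalanced {A : Type*} [DecidableEq A] (ω : ℕ → A) (C : ℕ) : Prop :=
  ∀ a : A, ∀ n i j : ℕ,
    |((factor ω i n).count a : ℤ) - ((factor ω j n).count a : ℤ)| ≤ (C : ℤ)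

/-- The Tribonacci morphism `τ(0) = 01`, `τ(1) = 02`, `τ(2) = 0`. -/
def tau : Fin 3 → List (Fin 3) := fun a =>
  if a = 0 then [0, 1] else if a = 1 then [0, 2] else [0]

/-- The iterates `τ^k(0)`, which are the prefixes of the Tribonacci word. -/
def tribPrefix : ℕ → List (Fin 3)
  | 0 => [0]
  | k + 1 => ((tribPrefix k).map tau).flatten

namespace TB

def L (k : ℕ) : ℕ := (tribPrefix k).length
def C (a : Fin 3) (k : ℕ) : ℕ := (tribPrefix k).count a
def pref (n : ℕ) : List (Fin 3) := (tribPrefix n).take n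

lemma tau_append (x y : List (Fin 3)) :
    ((x ++ y).map tau).flatten = (x.map tau).flatten ++ (y.map tau).flatten := by
  simp

lemma struct : ∀ k, tribPrefix (k+3) = tribPrefix (k+2) ++ (tribPrefix (k+1) ++ tribPrefix k)
  | 0 => by decide
  | (k+1) => by
    show ((tribPrefix (k+3)).map tau).flatten =
      ((tribPrefix (k+2)).map tau).flatten ++
        (((tribPrefix (k+1)).map tau).flatten ++ ((tribPrefix k).map tau).flatten)
    rw [struct k, tau_append, tau_append]

lemma L_rec (k : ℕ) : L (k+3) = L (k+2) + (L (k+1) + L k) := by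
  unfold L; rw [struct k]; simp

lemma C_rec (a : Fin 3) (k : ℕ) : C a (k+3) = C a (k+2) + (C a (k+1) + C a k) := by
  unfold C; rw [struct k]; simp [List.count_append]

lemma L_pos : ∀ k, 1 ≤ L k
  | 0 => by decide
  | 1 => by decide
  | 2 => by decide
  | (k+3) => by have h := L_pos k; have e := L_rec k; omega

lemma L_ge : ∀ k, k + 1 ≤ L k
  | 0 => by decide
  | 1 => by decide
  | 2 => by decide
  | (k+3) => by
    have h := L_ge (k+2); have h1 := L_pos (k+1); have h2 := L_pos k
    have e := L_rec k; omega

lemma L_two : ∀ k, L (k+1) ≤ 2 * L k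
  | 0 => by decide
  | 1 => by decide
  | 2 => by decide
  | (k+3) => by
    have h := L_pos k
    have e1 : L (k+4) = L (k+3) + (L (k+2) + L (k+1)) := L_rec (k+1)
    have e0 : L (k+3+1) = L (k+4) := rfl
    have e2 := L_rec k; omega

lemma trib_succ : ∀ k, ∃ r, tribPrefix (k+1) = tribPrefix k ++ r
  | 0 => ⟨[1], by decide⟩
  | 1 => ⟨[0,2], by decide⟩
  | 2 => ⟨[0,1,0], by decide⟩
  | (k+3) => ⟨_, struct (k+1)⟩

lemma L_mono : Monotone L := by
  apply monotone_nat_of_le_succ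
  intro k
  obtain ⟨r, hr⟩ := trib_succ k
  unfold L; rw [hr]; simp

lemma take_trib_le {k k' : ℕ} (h : k ≤ k') {n : ℕ} (hn : n ≤ L k) :
    (tribPrefix k').take n = (tribPrefix k).take n := by
  induction k' with
  | zero => have : k = 0 := by omega
            subst this; rfl
  | succ m ih =>
    rcases Nat.lt_or_ge k (m+1) with h' | h'
    · have hkm : k ≤ m := by omega
      obtain ⟨r, hr⟩ := trib_succ m
      rw [hr, List.take_append_of_le_length (le_trans hn (L_mono hkm)), ih hkm]
    · have : k = m + 1 := by omega
      subst this; rfl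

lemma pref_eq_take (K n : ℕ) (h : n ≤ L K) : pref n = (tribPrefix K).take n := by
  unfold pref
  rcases le_total n K with h' | h'
  · exact (take_trib_le h' (le_trans (Nat.le_of_succ_le (L_ge n)) le_rfl)).symm
  · exact take_trib_le h' h

lemma decomp : ∀ k n, L k ≤ n → n < L (k+1) → pref n = tribPrefix k ++ pref (n - L k)
  | 0, n => by
    intro h1 h2
    have e0 : L 0 = 1 := rfl
    have e1 : L (0+1) = 2 := rfl
    have : n = 1 := by omega
    subst this; decide
  | 1, n => by
    intro h1 h2
    have e0 : L 1 = 2 := rfl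
    have e1 : L (1+1) = 4 := rfl
    have : n = 2 ∨ n = 3 := by omega
    rcases this with h | h <;> subst h <;> decide
  | 2, n => by
    intro h1 h2
    have e0 : L 2 = 4 := rfl
    have e1 : L (2+1) = 7 := rfl
    have : n = 4 ∨ n = 5 ∨ n = 6 := by omega
    rcases this with h | h | h <;> subst h <;> decide
  | (k+3), n => by
    intro h1 h2
    have hnorm : L (k+3+1) = L (k+4) := rfl
    rw [hnorm] at h2
    have hrec : L (k+4) = L (k+3) + (L (k+2) + L (k+1)) := by
      have := L_rec (k+1); exact this
    set m := n - L (k+3) with hm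
    have hmle : m ≤ L (k+2) + L (k+1) := by omega
    have hrec3 : L (k+3) = L (k+2) + (L (k+1) + L k) := L_rec k
    have hmle3 : m ≤ L (k+3) := by have := L_pos k; omega
    have h4 : pref n = (tribPrefix (k+4)).take n := pref_eq_take (k+4) n (by omega)
    rw [h4, struct (k+1)]
    have hn' : n = (tribPrefix (k+3)).length + m := by
      have : (tribPrefix (k+3)).length = L (k+3) := rfl
      omega
    rw [hn', List.take_length_add_append]
    congr 1
    have hlen : m ≤ (tribPrefix (k+2) ++ tribPrefix (k+1)).length := by
      simp only [List.length_append]; exact hmle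
    have e2 : tribPrefix (k+3) = (tribPrefix (k+2) ++ tribPrefix (k+1)) ++ tribPrefix k := by
      rw [struct k, List.append_assoc]
    rw [pref_eq_take (k+3) m hmle3, e2, List.take_append_of_le_length hlen]

lemma pref_zero : pref 0 = [] := rfl

end TB
noncomputable section
namespace TB

/-- deviation of prefix counts: `Dd y a k = |τ^k(0)|_a - |τ^k(0)| * y^(a+1)`,
where `y = 1/β`. -/
def Dd (y : ℝ) (a : Fin 3) (k : ℕ) : ℝ := (C a k : ℝ) - (L k : ℝ) * y^((a:ℕ)+1)
def qq (y : ℝ) (a : Fin 3) (k : ℕ) : ℝ :=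
  Dd y a (k+1)^2 + (y^2+y) * Dd y a k * Dd y a (k+1) + y * Dd y a k^2
def Pp (y : ℝ) (a : Fin 3) : ℕ → ℝ
  | 0 => max (Dd y a 0) 0
  | (k+1) => Pp y a k + max (Dd y a (k+1)) 0
def Nn (y : ℝ) (a : Fin 3) : ℕ → ℝ
  | 0 => min (Dd y a 0) 0
  | (k+1) => Nn y a k + min (Dd y a (k+1)) 0
def gg (y : ℝ) (a : Fin 3) (n : ℕ) : ℝ := ((pref n).count a : ℝ) - (n : ℝ) * y^((a:ℕ)+1)
def Mv : Fin 3 → ℝ := ![1/2, 14/25, 67/100]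

lemma Mv_nonneg (a : Fin 3) : 0 ≤ Mv a := by fin_cases a <;> norm_num [Mv]

lemma exists_y : ∃ y : ℝ, y^3 + y^2 + y = 1 ∧
    (0.5436890126:ℝ) ≤ y ∧ y ≤ 0.5436890127 := by
  have hcont : ContinuousOn (fun x : ℝ => x^3 + x^2 + x - 1)
      (Set.Icc 0.5436890126 0.5436890127) := by fun_prop
  have h := intermediate_value_Icc (by norm_num : (0.5436890126:ℝ) ≤ 0.5436890127) hcont
  have h0 : (0:ℝ) ∈ Set.Icc ((0.5436890126:ℝ)^3 + 0.5436890126^2 + 0.5436890126 - 1)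
      ((0.5436890127:ℝ)^3 + 0.5436890127^2 + 0.5436890127 - 1) := by
    constructor <;> norm_num
  obtain ⟨y, hmem, hval⟩ := h h0
  have hval' : y^3 + y^2 + y - 1 = 0 := hval
  exact ⟨y, by linarith, hmem.1, hmem.2⟩

variable {y : ℝ}

lemma Dd_rec (y : ℝ) (a : Fin 3) (k : ℕ) :
    Dd y a (k+3) = Dd y a (k+2) + (Dd y a (k+1) + Dd y a k) := by
  unfold Dd; rw [C_rec, L_rec]; push_cast; ring

lemma E_zero (hy : y^3 + y^2 + y = 1) (a : Fin 3) :
    ∀ k, Dd y a (k+2) + (y^2+y) * Dd y a (k+1) + y * Dd y a k = 0 := by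
  intro k; induction k with
  | zero =>
    fin_cases a
    · show Dd y 0 2 + (y^2+y) * Dd y 0 1 + y * Dd y 0 0 = 0
      simp only [Dd, show ((0:Fin 3):ℕ) = 0 from rfl,
        show C (0:Fin 3) 0 = 1 from by decide, show C (0:Fin 3) 1 = 1 from by decide,
        show C (0:Fin 3) 2 = 2 from by decide,
        show L 0 = 1 from rfl, show L 1 = 2 from rfl, show L 2 = 4 from rfl]
      push_cast
      linear_combination (-2 : ℝ) * hy
    · show Dd y 1 2 + (y^2+y) * Dd y 1 1 + y * Dd y 1 0 = 0
      simp only [Dd, show ((1:Fin 3):ℕ) = 1 from rfl,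
        show C (1:Fin 3) 0 = 0 from by decide, show C (1:Fin 3) 1 = 1 from by decide,
        show C (1:Fin 3) 2 = 1 from by decide,
        show L 0 = 1 from rfl, show L 1 = 2 from rfl, show L 2 = 4 from rfl]
      push_cast
      linear_combination (-2*y - 1 : ℝ) * hy
    · show Dd y 2 2 + (y^2+y) * Dd y 2 1 + y * Dd y 2 0 = 0
      simp only [Dd, show ((2:Fin 3):ℕ) = 2 from rfl,
        show C (2:Fin 3) 0 = 0 from by decide, show C (2:Fin 3) 1 = 0 from by decide,
        show C (2:Fin 3) 2 = 1 from by decide,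
        show L 0 = 1 from rfl, show L 1 = 2 from rfl, show L 2 = 4 from rfl]
      push_cast
      linear_combination (-2*y^2 - y - 1 : ℝ) * hy
  | succ k ih =>
    have h3 : Dd y a (k+3) = Dd y a (k+2) + (Dd y a (k+1) + Dd y a k) := Dd_rec y a k
    have e2 : Dd y a (k+1+2) = Dd y a (k+3) := rfl
    have e1 : Dd y a (k+1+1) = Dd y a (k+2) := rfl
    rw [e2, e1, h3]
    linear_combination (y^2+y+1) * ih + (-(y+1) * Dd y a (k+1) - Dd y a k) * hy

lemma Dd_quad (hy : y^3 + y^2 + y = 1) (a : Fin 3) (k : ℕ) :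
    Dd y a (k+2) = -(y^2+y) * Dd y a (k+1) - y * Dd y a k := by
  have := E_zero hy a k; linarith

lemma q_step (hy : y^3 + y^2 + y = 1) (a : Fin 3) (k : ℕ) :
    qq y a (k+1) = y * qq y a k := by
  unfold qq
  have e1 : Dd y a (k+1+1) = Dd y a (k+2) := rfl
  rw [e1, Dd_quad hy a k]
  ring

lemma q_pow (hy : y^3 + y^2 + y = 1) (a : Fin 3) :
    ∀ k, qq y a k = qq y a 0 * y^k := by
  intro k; induction k with
  | zero => simp
  | succ k ih => rw [q_step hy, ih, pow_succ]; ring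

end TB
end
namespace TB

lemma pow_bounds {y : ℝ} (hyl : (0.5436890126:ℝ) ≤ y) (hyu : y ≤ 0.5436890127) :
    ((0.2955977424:ℝ) ≤ y^2 ∧ y^2 ≤ 0.2955977426) ∧
    ((0.1607132447:ℝ) ≤ y^3 ∧ y^3 ≤ 0.1607132448) ∧
    ((0.0873780253:ℝ) ≤ y^4 ∧ y^4 ≤ 0.0873780254) ∧
    ((0.0475064723:ℝ) ≤ y^5 ∧ y^5 ≤ 0.0475064724) ∧
    ((0.0258287470:ℝ) ≤ y^6 ∧ y^6 ≤ 0.0258287471) ∧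
    ((0.0140428059:ℝ) ≤ y^7 ∧ y^7 ≤ 0.0140428060) := by
  have h2l : (0.2955977424:ℝ) ≤ y^2 := by nlinarith
  have h2u : y^2 ≤ 0.2955977426 := by nlinarith
  have h3l : (0.1607132447:ℝ) ≤ y^3 := by nlinarith
  have h3u : y^3 ≤ 0.1607132448 := by nlinarith
  have h4l : (0.0873780253:ℝ) ≤ y^4 := by nlinarith
  have h4u : y^4 ≤ 0.0873780254 := by nlinarith
  have h5l : (0.0475064723:ℝ) ≤ y^5 := by nlinarith
  have h5u : y^5 ≤ 0.0475064724 := by nlinarith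
  have h6l : (0.0258287470:ℝ) ≤ y^6 := by nlinarith
  have h6u : y^6 ≤ 0.0258287471 := by nlinarith
  have h7l : (0.0140428059:ℝ) ≤ y^7 := by nlinarith
  have h7u : y^7 ≤ 0.0140428060 := by nlinarith
  exact ⟨⟨h2l, h2u⟩, ⟨h3l, h3u⟩, ⟨h4l, h4u⟩, ⟨h5l, h5u⟩, ⟨h6l, h6u⟩, ⟨h7l, h7u⟩⟩

lemma kappa_pos {y : ℝ} (hyl : (0.5436890126:ℝ) ≤ y) (hyu : y ≤ 0.5436890127) :
    (0.3675884482:ℝ) ≤ y - (y^2+y)^2/4 := by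
  obtain ⟨⟨h2l, h2u⟩, ⟨h3l, h3u⟩, ⟨h4l, h4u⟩, -⟩ := pow_bounds hyl hyu
  nlinarith

lemma q0_le {y : ℝ} (hyl : (0.5436890126:ℝ) ≤ y) (hyu : y ≤ 0.5436890127) (a : Fin 3) :
    qq y a 0 ≤ (y - (y^2+y)^2/4) * Mv a ^ 2 := by
  obtain ⟨⟨h2l, h2u⟩, ⟨h3l, h3u⟩, ⟨h4l, h4u⟩, ⟨h5l, h5u⟩, ⟨h6l, h6u⟩, ⟨h7l, h7u⟩⟩ :=
    pow_bounds hyl hyu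
  fin_cases a
  · show qq y 0 0 ≤ (y - (y^2+y)^2/4) * Mv 0 ^ 2
    simp only [qq, Dd, show ((0:Fin 3):ℕ) = 0 from rfl,
      show C (0:Fin 3) 0 = 1 from by decide, show C (0:Fin 3) 1 = 1 from by decide,
      show L 0 = 1 from rfl, show L 1 = 2 from rfl, show Mv 0 = 1/2 from by norm_num [Mv]]
    push_cast
    nlinarith
  · show qq y 1 0 ≤ (y - (y^2+y)^2/4) * Mv 1 ^ 2
    simp only [qq, Dd, show ((1:Fin 3):ℕ) = 1 from rfl,
      show C (1:Fin 3) 0 = 0 from by decide, show C (1:Fin 3) 1 = 1 from by decide,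
      show L 0 = 1 from rfl, show L 1 = 2 from rfl, show Mv 1 = 14/25 from by norm_num [Mv]]
    push_cast
    nlinarith
  · show qq y 2 0 ≤ (y - (y^2+y)^2/4) * Mv 2 ^ 2
    simp only [qq, Dd, show ((2:Fin 3):ℕ) = 2 from rfl,
      show C (2:Fin 3) 0 = 0 from by decide, show C (2:Fin 3) 1 = 0 from by decide,
      show L 0 = 1 from rfl, show L 1 = 2 from rfl, show Mv 2 = 67/100 from by simp [Mv]]
    push_cast
    nlinarith

lemma D_le {y : ℝ} (hy : y^3 + y^2 + y = 1) (hyl : (0.5436890126:ℝ) ≤ y)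
    (hyu : y ≤ 0.5436890127) (a : Fin 3) (k : ℕ) :
    |Dd y a k| ≤ Mv a * (3/4:ℝ)^k := by
  have hκl := kappa_pos hyl hyu
  have hκpos : 0 < y - (y^2+y)^2/4 := by linarith
  have hiden : qq y a k - (y - (y^2+y)^2/4) * Dd y a k^2
      = (Dd y a (k+1) + (y^2+y) * Dd y a k / 2)^2 := by
    unfold qq; ring
  have hDq : (y - (y^2+y)^2/4) * Dd y a k^2 ≤ qq y a k := by
    nlinarith [sq_nonneg (Dd y a (k+1) + (y^2+y) * Dd y a k / 2)]
  have hqk : qq y a k = qq y a 0 * y^k := q_pow hy a k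
  have hyknn : (0:ℝ) ≤ y^k := by positivity
  have hyk : y^k ≤ (9/16:ℝ)^k := pow_le_pow_left₀ (by linarith) (by linarith) k
  have hq0 := q0_le hyl hyu a
  have hKM : (0:ℝ) ≤ (y - (y^2+y)^2/4) * Mv a ^ 2 := by
    have := Mv_nonneg a; positivity
  have c1 : (y - (y^2+y)^2/4) * Dd y a k^2
      ≤ (y - (y^2+y)^2/4) * (Mv a^2 * (9/16:ℝ)^k) := by
    calc (y - (y^2+y)^2/4) * Dd y a k^2 ≤ qq y a k := hDq
    _ = qq y a 0 * y^k := hqk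
    _ ≤ ((y - (y^2+y)^2/4) * Mv a ^ 2) * y^k := mul_le_mul_of_nonneg_right hq0 hyknn
    _ ≤ ((y - (y^2+y)^2/4) * Mv a ^ 2) * (9/16:ℝ)^k := mul_le_mul_of_nonneg_left hyk hKM
    _ = (y - (y^2+y)^2/4) * (Mv a^2 * (9/16:ℝ)^k) := by ring
  have key : Dd y a k^2 ≤ Mv a^2 * (9/16:ℝ)^k := (mul_le_mul_iff_of_pos_left hκpos).mp c1
  have hMk : (0:ℝ) ≤ Mv a * (3/4:ℝ)^k := mul_nonneg (Mv_nonneg a) (by positivity)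
  have hsq : (Mv a * (3/4:ℝ)^k)^2 = Mv a^2 * (9/16:ℝ)^k := by
    rw [mul_pow, pow_right_comm]
    norm_num
  nlinarith [key, hMk, sq_abs (Dd y a k), abs_nonneg (Dd y a k), hsq]

end TB
namespace TB

lemma Pp_succ (y : ℝ) (a : Fin 3) (k : ℕ) :
    Pp y a (k+1) = Pp y a k + max (Dd y a (k+1)) 0 := rfl
lemma Nn_succ (y : ℝ) (a : Fin 3) (k : ℕ) :
    Nn y a (k+1) = Nn y a k + min (Dd y a (k+1)) 0 := rfl

lemma Pp_mono (y : ℝ) (a : Fin 3) : Monotone (Pp y a) := by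
  apply monotone_nat_of_le_succ
  intro k
  rw [Pp_succ]
  have := le_max_right (Dd y a (k+1)) (0:ℝ)
  linarith

lemma Nn_anti (y : ℝ) (a : Fin 3) : Antitone (Nn y a) := by
  apply antitone_nat_of_succ_le
  intro k
  rw [Nn_succ]
  have := min_le_right (Dd y a (k+1)) (0:ℝ)
  linarith

lemma Pp_all {y : ℝ} (hy : y^3 + y^2 + y = 1) (hyl : (0.5436890126:ℝ) ≤ y)
    (hyu : y ≤ 0.5436890127) (a : Fin 3) (k : ℕ) :
    Pp y a k ≤ Pp y a 19 + Mv a * 4 * (3/4:ℝ)^20 := by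
  have hM := Mv_nonneg a
  have tail : ∀ i, Pp y a (19+i) ≤ Pp y a 19 + Mv a * 4 * ((3/4:ℝ)^20 - (3/4:ℝ)^(20+i)) := by
    intro i
    induction i with
    | zero => norm_num
    | succ i ih =>
      have e : Pp y a (19+(i+1)) = Pp y a (19+i) + max (Dd y a (20+i)) 0 := by
        rw [show 19+(i+1) = (19+i)+1 from rfl, Pp_succ, show (19+i)+1 = 20+i from by omega]
      have hD := D_le hy hyl hyu a (20+i)
      have hmax : max (Dd y a (20+i)) 0 ≤ Mv a * (3/4:ℝ)^(20+i) :=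
        max_le (le_trans (le_abs_self _) hD) (mul_nonneg hM (by positivity))
      have hpow : (3/4:ℝ)^(20+(i+1)) = (3/4:ℝ)^(20+i) * (3/4) := by
        rw [show 20+(i+1) = (20+i)+1 from rfl, pow_succ]
      rw [e, hpow]
      nlinarith [ih, hmax]
  rcases le_or_gt k 19 with h | h
  · have h1 : Pp y a k ≤ Pp y a 19 := Pp_mono y a h
    have h2 : (0:ℝ) ≤ Mv a * 4 * (3/4:ℝ)^20 := by positivity
    linarith
  · have e : k = 19 + (k - 19) := by omega
    rw [e]
    refine le_trans (tail (k-19)) ?_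
    have h2 : (0:ℝ) ≤ Mv a * 4 * (3/4:ℝ)^(20+(k-19)) := by positivity
    nlinarith

lemma Nn_all {y : ℝ} (hy : y^3 + y^2 + y = 1) (hyl : (0.5436890126:ℝ) ≤ y)
    (hyu : y ≤ 0.5436890127) (a : Fin 3) (k : ℕ) :
    Nn y a 19 - Mv a * 4 * (3/4:ℝ)^20 ≤ Nn y a k := by
  have hM := Mv_nonneg a
  have tail : ∀ i, Nn y a 19 - Mv a * 4 * ((3/4:ℝ)^20 - (3/4:ℝ)^(20+i)) ≤ Nn y a (19+i) := by
    intro i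
    induction i with
    | zero => norm_num
    | succ i ih =>
      have e : Nn y a (19+(i+1)) = Nn y a (19+i) + min (Dd y a (20+i)) 0 := by
        rw [show 19+(i+1) = (19+i)+1 from rfl, Nn_succ, show (19+i)+1 = 20+i from by omega]
      have hD := D_le hy hyl hyu a (20+i)
      have hmin : -(Mv a * (3/4:ℝ)^(20+i)) ≤ min (Dd y a (20+i)) 0 :=
        le_min (by have := neg_abs_le (Dd y a (20+i)); linarith)
          (by have : (0:ℝ) ≤ Mv a * (3/4:ℝ)^(20+i) := mul_nonneg hM (by positivity); linarith)
      have hpow : (3/4:ℝ)^(20+(i+1)) = (3/4:ℝ)^(20+i) * (3/4) := by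
        rw [show 20+(i+1) = (20+i)+1 from rfl, pow_succ]
      rw [e, hpow]
      nlinarith [ih, hmin]
  rcases le_or_gt k 19 with h | h
  · have h1 : Nn y a 19 ≤ Nn y a k := Nn_anti y a h
    have h2 : (0:ℝ) ≤ Mv a * 4 * (3/4:ℝ)^20 := by positivity
    linarith
  · have e : k = 19 + (k - 19) := by omega
    rw [e]
    refine le_trans ?_ (tail (k-19))
    have h2 : (0:ℝ) ≤ Mv a * 4 * (3/4:ℝ)^(20+(k-19)) := by positivity
    nlinarith

lemma gg_zero (y : ℝ) (a : Fin 3) : gg y a 0 = 0 := by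
  simp [gg, pref]

lemma gg_one (y : ℝ) (a : Fin 3) : gg y a 1 = Dd y a 0 := by
  have h : pref 1 = tribPrefix 0 := rfl
  simp only [gg, Dd, C, h]
  push_cast
  have : (L 0 : ℝ) = 1 := by norm_num [L, tribPrefix]
  rw [this]

lemma gg_bound (y : ℝ) (a : Fin 3) :
    ∀ k n, n < L (k+1) → Nn y a k ≤ gg y a n ∧ gg y a n ≤ Pp y a k := by
  intro k
  induction k with
  | zero =>
    intro n hn
    have e1 : L (0+1) = 2 := rfl
    have : n = 0 ∨ n = 1 := by omega
    rcases this with h | h <;> subst h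
    · rw [gg_zero]
      exact ⟨min_le_right _ _, le_max_right _ _⟩
    · rw [gg_one]
      exact ⟨min_le_left _ _, le_max_left _ _⟩
  | succ k ih =>
    intro n hn
    rcases lt_or_ge n (L (k+1)) with h | h
    · obtain ⟨h1, h2⟩ := ih n h
      have hp := le_max_right (Dd y a (k+1)) (0:ℝ)
      have hq := min_le_right (Dd y a (k+1)) (0:ℝ)
      rw [Pp_succ, Nn_succ]
      constructor <;> linarith
    · have hd := decomp (k+1) n h hn
      set m := n - L (k+1) with hmdef
      have hmn : n = L (k+1) + m := by omega
      have hL2 : L (k+2) ≤ 2 * L (k+1) := by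
        have := L_two (k+1)
        have e : L (k+1+1) = L (k+2) := rfl
        omega
      have hm : m < L (k+1) := by
        have e : L (k+1+1) = L (k+2) := rfl
        omega
      obtain ⟨h1, h2⟩ := ih m hm
      have hgg : gg y a n = Dd y a (k+1) + gg y a m := by
        simp only [gg, Dd, C, hd, List.count_append]
        rw [hmn]
        push_cast
        ring
      have hp := le_max_left (Dd y a (k+1)) (0:ℝ)
      have hq := min_le_left (Dd y a (k+1)) (0:ℝ)
      rw [Pp_succ, Nn_succ, hgg]
      constructor <;> linarith

lemma gg_global {y : ℝ} (hy : y^3 + y^2 + y = 1) (hyl : (0.5436890126:ℝ) ≤ y)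
    (hyu : y ≤ 0.5436890127) (a : Fin 3) (n : ℕ) :
    Nn y a 19 - Mv a * 4 * (3/4:ℝ)^20 ≤ gg y a n ∧
      gg y a n ≤ Pp y a 19 + Mv a * 4 * (3/4:ℝ)^20 := by
  have hn : n < L (n+1) := by have := L_ge (n+1); omega
  obtain ⟨h1, h2⟩ := gg_bound y a n n hn
  exact ⟨le_trans (Nn_all hy hyl hyu a n) h1, le_trans h2 (Pp_all hy hyl hyu a n)⟩

end TB
namespace TB

lemma Dd0_eq (y : ℝ) (k : ℕ) : Dd y 0 k = (C 0 k : ℝ) - (L k : ℝ) * y := by simp [Dd]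
lemma Dd1_eq (y : ℝ) (k : ℕ) : Dd y 1 k = (C 1 k : ℝ) - (L k : ℝ) * y^2 := by simp [Dd]
lemma Dd2_eq (y : ℝ) (k : ℕ) : Dd y 2 k = (C 2 k : ℝ) - (L k : ℝ) * y^3 := by simp [Dd]

lemma Pp_zero (y : ℝ) (a : Fin 3) : Pp y a 0 = max (Dd y a 0) 0 := rfl
lemma Nn_zero (y : ℝ) (a : Fin 3) : Nn y a 0 = min (Dd y a 0) 0 := rfl

lemma Lv0 : L 0 = 1 := rfl
lemma Lv1 : L 1 = 2 := rfl
lemma Lv2 : L 2 = 4 := rfl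
lemma Lv3 : L 3 = 7 := by
  have a1 := Lv2; have a2 := Lv1; have a3 := Lv0
  have h := L_rec 0; norm_num at h; omega
lemma Lv4 : L 4 = 13 := by
  have a1 := Lv3; have a2 := Lv2; have a3 := Lv1
  have h := L_rec 1; norm_num at h; omega
lemma Lv5 : L 5 = 24 := by
  have a1 := Lv4; have a2 := Lv3; have a3 := Lv2
  have h := L_rec 2; norm_num at h; omega
lemma Lv6 : L 6 = 44 := by
  have a1 := Lv5; have a2 := Lv4; have a3 := Lv3
  have h := L_rec 3; norm_num at h; omega
lemma Lv7 : L 7 = 81 := by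
  have a1 := Lv6; have a2 := Lv5; have a3 := Lv4
  have h := L_rec 4; norm_num at h; omega
lemma Lv8 : L 8 = 149 := by
  have a1 := Lv7; have a2 := Lv6; have a3 := Lv5
  have h := L_rec 5; norm_num at h; omega
lemma Lv9 : L 9 = 274 := by
  have a1 := Lv8; have a2 := Lv7; have a3 := Lv6
  have h := L_rec 6; norm_num at h; omega
lemma Lv10 : L 10 = 504 := by
  have a1 := Lv9; have a2 := Lv8; have a3 := Lv7
  have h := L_rec 7; norm_num at h; omega
lemma Lv11 : L 11 = 927 := by
  have a1 := Lv10; have a2 := Lv9; have a3 := Lv8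
  have h := L_rec 8; norm_num at h; omega
lemma Lv12 : L 12 = 1705 := by
  have a1 := Lv11; have a2 := Lv10; have a3 := Lv9
  have h := L_rec 9; norm_num at h; omega
lemma Lv13 : L 13 = 3136 := by
  have a1 := Lv12; have a2 := Lv11; have a3 := Lv10
  have h := L_rec 10; norm_num at h; omega
lemma Lv14 : L 14 = 5768 := by
  have a1 := Lv13; have a2 := Lv12; have a3 := Lv11
  have h := L_rec 11; norm_num at h; omega
lemma Lv15 : L 15 = 10609 := by
  have a1 := Lv14; have a2 := Lv13; have a3 := Lv12
  have h := L_rec 12; norm_num at h; omega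
lemma Lv16 : L 16 = 19513 := by
  have a1 := Lv15; have a2 := Lv14; have a3 := Lv13
  have h := L_rec 13; norm_num at h; omega
lemma Lv17 : L 17 = 35890 := by
  have a1 := Lv16; have a2 := Lv15; have a3 := Lv14
  have h := L_rec 14; norm_num at h; omega
lemma Lv18 : L 18 = 66012 := by
  have a1 := Lv17; have a2 := Lv16; have a3 := Lv15
  have h := L_rec 15; norm_num at h; omega
lemma Lv19 : L 19 = 121415 := by
  have a1 := Lv18; have a2 := Lv17; have a3 := Lv16
  have h := L_rec 16; norm_num at h; omega

lemma Cv0_0 : C 0 0 = 1 := by decide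
lemma Cv0_1 : C 0 1 = 1 := by decide
lemma Cv0_2 : C 0 2 = 2 := by decide
lemma Cv0_3 : C 0 3 = 4 := by
  have a1 := Cv0_2; have a2 := Cv0_1; have a3 := Cv0_0
  have h := C_rec 0 0; norm_num at h; omega
lemma Cv0_4 : C 0 4 = 7 := by
  have a1 := Cv0_3; have a2 := Cv0_2; have a3 := Cv0_1
  have h := C_rec 0 1; norm_num at h; omega
lemma Cv0_5 : C 0 5 = 13 := by
  have a1 := Cv0_4; have a2 := Cv0_3; have a3 := Cv0_2
  have h := C_rec 0 2; norm_num at h; omega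
lemma Cv0_6 : C 0 6 = 24 := by
  have a1 := Cv0_5; have a2 := Cv0_4; have a3 := Cv0_3
  have h := C_rec 0 3; norm_num at h; omega
lemma Cv0_7 : C 0 7 = 44 := by
  have a1 := Cv0_6; have a2 := Cv0_5; have a3 := Cv0_4
  have h := C_rec 0 4; norm_num at h; omega
lemma Cv0_8 : C 0 8 = 81 := by
  have a1 := Cv0_7; have a2 := Cv0_6; have a3 := Cv0_5
  have h := C_rec 0 5; norm_num at h; omega
lemma Cv0_9 : C 0 9 = 149 := by
  have a1 := Cv0_8; have a2 := Cv0_7; have a3 := Cv0_6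
  have h := C_rec 0 6; norm_num at h; omega
lemma Cv0_10 : C 0 10 = 274 := by
  have a1 := Cv0_9; have a2 := Cv0_8; have a3 := Cv0_7
  have h := C_rec 0 7; norm_num at h; omega
lemma Cv0_11 : C 0 11 = 504 := by
  have a1 := Cv0_10; have a2 := Cv0_9; have a3 := Cv0_8
  have h := C_rec 0 8; norm_num at h; omega
lemma Cv0_12 : C 0 12 = 927 := by
  have a1 := Cv0_11; have a2 := Cv0_10; have a3 := Cv0_9
  have h := C_rec 0 9; norm_num at h; omega
lemma Cv0_13 : C 0 13 = 1705 := by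
  have a1 := Cv0_12; have a2 := Cv0_11; have a3 := Cv0_10
  have h := C_rec 0 10; norm_num at h; omega
lemma Cv0_14 : C 0 14 = 3136 := by
  have a1 := Cv0_13; have a2 := Cv0_12; have a3 := Cv0_11
  have h := C_rec 0 11; norm_num at h; omega
lemma Cv0_15 : C 0 15 = 5768 := by
  have a1 := Cv0_14; have a2 := Cv0_13; have a3 := Cv0_12
  have h := C_rec 0 12; norm_num at h; omega
lemma Cv0_16 : C 0 16 = 10609 := by
  have a1 := Cv0_15; have a2 := Cv0_14; have a3 := Cv0_13
  have h := C_rec 0 13; norm_num at h; omega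
lemma Cv0_17 : C 0 17 = 19513 := by
  have a1 := Cv0_16; have a2 := Cv0_15; have a3 := Cv0_14
  have h := C_rec 0 14; norm_num at h; omega
lemma Cv0_18 : C 0 18 = 35890 := by
  have a1 := Cv0_17; have a2 := Cv0_16; have a3 := Cv0_15
  have h := C_rec 0 15; norm_num at h; omega
lemma Cv0_19 : C 0 19 = 66012 := by
  have a1 := Cv0_18; have a2 := Cv0_17; have a3 := Cv0_16
  have h := C_rec 0 16; norm_num at h; omega

lemma Cv1_0 : C 1 0 = 0 := by decide
lemma Cv1_1 : C 1 1 = 1 := by decide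
lemma Cv1_2 : C 1 2 = 1 := by decide
lemma Cv1_3 : C 1 3 = 2 := by
  have a1 := Cv1_2; have a2 := Cv1_1; have a3 := Cv1_0
  have h := C_rec 1 0; norm_num at h; omega
lemma Cv1_4 : C 1 4 = 4 := by
  have a1 := Cv1_3; have a2 := Cv1_2; have a3 := Cv1_1
  have h := C_rec 1 1; norm_num at h; omega
lemma Cv1_5 : C 1 5 = 7 := by
  have a1 := Cv1_4; have a2 := Cv1_3; have a3 := Cv1_2
  have h := C_rec 1 2; norm_num at h; omega
lemma Cv1_6 : C 1 6 = 13 := by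
  have a1 := Cv1_5; have a2 := Cv1_4; have a3 := Cv1_3
  have h := C_rec 1 3; norm_num at h; omega
lemma Cv1_7 : C 1 7 = 24 := by
  have a1 := Cv1_6; have a2 := Cv1_5; have a3 := Cv1_4
  have h := C_rec 1 4; norm_num at h; omega
lemma Cv1_8 : C 1 8 = 44 := by
  have a1 := Cv1_7; have a2 := Cv1_6; have a3 := Cv1_5
  have h := C_rec 1 5; norm_num at h; omega
lemma Cv1_9 : C 1 9 = 81 := by
  have a1 := Cv1_8; have a2 := Cv1_7; have a3 := Cv1_6
  have h := C_rec 1 6; norm_num at h; omega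
lemma Cv1_10 : C 1 10 = 149 := by
  have a1 := Cv1_9; have a2 := Cv1_8; have a3 := Cv1_7
  have h := C_rec 1 7; norm_num at h; omega
lemma Cv1_11 : C 1 11 = 274 := by
  have a1 := Cv1_10; have a2 := Cv1_9; have a3 := Cv1_8
  have h := C_rec 1 8; norm_num at h; omega
lemma Cv1_12 : C 1 12 = 504 := by
  have a1 := Cv1_11; have a2 := Cv1_10; have a3 := Cv1_9
  have h := C_rec 1 9; norm_num at h; omega
lemma Cv1_13 : C 1 13 = 927 := by
  have a1 := Cv1_12; have a2 := Cv1_11; have a3 := Cv1_10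
  have h := C_rec 1 10; norm_num at h; omega
lemma Cv1_14 : C 1 14 = 1705 := by
  have a1 := Cv1_13; have a2 := Cv1_12; have a3 := Cv1_11
  have h := C_rec 1 11; norm_num at h; omega
lemma Cv1_15 : C 1 15 = 3136 := by
  have a1 := Cv1_14; have a2 := Cv1_13; have a3 := Cv1_12
  have h := C_rec 1 12; norm_num at h; omega
lemma Cv1_16 : C 1 16 = 5768 := by
  have a1 := Cv1_15; have a2 := Cv1_14; have a3 := Cv1_13
  have h := C_rec 1 13; norm_num at h; omega
lemma Cv1_17 : C 1 17 = 10609 := by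
  have a1 := Cv1_16; have a2 := Cv1_15; have a3 := Cv1_14
  have h := C_rec 1 14; norm_num at h; omega
lemma Cv1_18 : C 1 18 = 19513 := by
  have a1 := Cv1_17; have a2 := Cv1_16; have a3 := Cv1_15
  have h := C_rec 1 15; norm_num at h; omega
lemma Cv1_19 : C 1 19 = 35890 := by
  have a1 := Cv1_18; have a2 := Cv1_17; have a3 := Cv1_16
  have h := C_rec 1 16; norm_num at h; omega

lemma Cv2_0 : C 2 0 = 0 := by decide
lemma Cv2_1 : C 2 1 = 0 := by decide
lemma Cv2_2 : C 2 2 = 1 := by decide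
lemma Cv2_3 : C 2 3 = 1 := by
  have a1 := Cv2_2; have a2 := Cv2_1; have a3 := Cv2_0
  have h := C_rec 2 0; norm_num at h; omega
lemma Cv2_4 : C 2 4 = 2 := by
  have a1 := Cv2_3; have a2 := Cv2_2; have a3 := Cv2_1
  have h := C_rec 2 1; norm_num at h; omega
lemma Cv2_5 : C 2 5 = 4 := by
  have a1 := Cv2_4; have a2 := Cv2_3; have a3 := Cv2_2
  have h := C_rec 2 2; norm_num at h; omega
lemma Cv2_6 : C 2 6 = 7 := by
  have a1 := Cv2_5; have a2 := Cv2_4; have a3 := Cv2_3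
  have h := C_rec 2 3; norm_num at h; omega
lemma Cv2_7 : C 2 7 = 13 := by
  have a1 := Cv2_6; have a2 := Cv2_5; have a3 := Cv2_4
  have h := C_rec 2 4; norm_num at h; omega
lemma Cv2_8 : C 2 8 = 24 := by
  have a1 := Cv2_7; have a2 := Cv2_6; have a3 := Cv2_5
  have h := C_rec 2 5; norm_num at h; omega
lemma Cv2_9 : C 2 9 = 44 := by
  have a1 := Cv2_8; have a2 := Cv2_7; have a3 := Cv2_6
  have h := C_rec 2 6; norm_num at h; omega
lemma Cv2_10 : C 2 10 = 81 := by
  have a1 := Cv2_9; have a2 := Cv2_8; have a3 := Cv2_7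
  have h := C_rec 2 7; norm_num at h; omega
lemma Cv2_11 : C 2 11 = 149 := by
  have a1 := Cv2_10; have a2 := Cv2_9; have a3 := Cv2_8
  have h := C_rec 2 8; norm_num at h; omega
lemma Cv2_12 : C 2 12 = 274 := by
  have a1 := Cv2_11; have a2 := Cv2_10; have a3 := Cv2_9
  have h := C_rec 2 9; norm_num at h; omega
lemma Cv2_13 : C 2 13 = 504 := by
  have a1 := Cv2_12; have a2 := Cv2_11; have a3 := Cv2_10
  have h := C_rec 2 10; norm_num at h; omega
lemma Cv2_14 : C 2 14 = 927 := by
  have a1 := Cv2_13; have a2 := Cv2_12; have a3 := Cv2_11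
  have h := C_rec 2 11; norm_num at h; omega
lemma Cv2_15 : C 2 15 = 1705 := by
  have a1 := Cv2_14; have a2 := Cv2_13; have a3 := Cv2_12
  have h := C_rec 2 12; norm_num at h; omega
lemma Cv2_16 : C 2 16 = 3136 := by
  have a1 := Cv2_15; have a2 := Cv2_14; have a3 := Cv2_13
  have h := C_rec 2 13; norm_num at h; omega
lemma Cv2_17 : C 2 17 = 5768 := by
  have a1 := Cv2_16; have a2 := Cv2_15; have a3 := Cv2_14
  have h := C_rec 2 14; norm_num at h; omega
lemma Cv2_18 : C 2 18 = 10609 := by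
  have a1 := Cv2_17; have a2 := Cv2_16; have a3 := Cv2_15
  have h := C_rec 2 15; norm_num at h; omega
lemma Cv2_19 : C 2 19 = 19513 := by
  have a1 := Cv2_18; have a2 := Cv2_17; have a3 := Cv2_16
  have h := C_rec 2 16; norm_num at h; omega

attribute [irreducible] Dd C L Pp Nn

lemma eps0_0 {y : ℝ} (hyl : (0.5436890126:ℝ) ≤ y) (hyu : y ≤ 0.5436890127) :
    |Dd y 0 0| ≤ (456311/1000000 : ℝ) := by
  rw [Dd0_eq, Cv0_0, Lv0]
  push_cast; rw [abs_le]; constructor <;> nlinarith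

lemma eps0_1 {y : ℝ} (hyl : (0.5436890126:ℝ) ≤ y) (hyu : y ≤ 0.5436890127) :
    |Dd y 0 1| ≤ (87379/1000000 : ℝ) := by
  rw [Dd0_eq, Cv0_1, Lv1]
  push_cast; rw [abs_le]; constructor <;> nlinarith

lemma eps0_2 {y : ℝ} (hyl : (0.5436890126:ℝ) ≤ y) (hyu : y ≤ 0.5436890127) :
    |Dd y 0 2| ≤ (174757/1000000 : ℝ) := by
  rw [Dd0_eq, Cv0_2, Lv2]
  push_cast; rw [abs_le]; constructor <;> nlinarith

lemma eps0_3 {y : ℝ} (hyl : (0.5436890126:ℝ) ≤ y) (hyu : y ≤ 0.5436890127) :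
    |Dd y 0 3| ≤ (194177/1000000 : ℝ) := by
  rw [Dd0_eq, Cv0_3, Lv3]
  push_cast; rw [abs_le]; constructor <;> nlinarith

lemma eps0_4 {y : ℝ} (hyl : (0.5436890126:ℝ) ≤ y) (hyu : y ≤ 0.5436890127) :
    |Dd y 0 4| ≤ (33979/500000 : ℝ) := by
  rw [Dd0_eq, Cv0_4, Lv4]
  push_cast; rw [abs_le]; constructor <;> nlinarith

lemma eps0_5 {y : ℝ} (hyl : (0.5436890126:ℝ) ≤ y) (hyu : y ≤ 0.5436890127) :
    |Dd y 0 5| ≤ (48537/1000000 : ℝ) := by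
  rw [Dd0_eq, Cv0_5, Lv5]
  push_cast; rw [abs_le]; constructor <;> nlinarith

lemma eps0_6 {y : ℝ} (hyl : (0.5436890126:ℝ) ≤ y) (hyu : y ≤ 0.5436890127) :
    |Dd y 0 6| ≤ (19421/250000 : ℝ) := by
  rw [Dd0_eq, Cv0_6, Lv6]
  push_cast; rw [abs_le]; constructor <;> nlinarith

lemma eps0_7 {y : ℝ} (hyl : (0.5436890126:ℝ) ≤ y) (hyu : y ≤ 0.5436890127) :
    |Dd y 0 7| ≤ (38811/1000000 : ℝ) := by
  rw [Dd0_eq, Cv0_7, Lv7]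
  push_cast; rw [abs_le]; constructor <;> nlinarith

lemma eps0_8 {y : ℝ} (hyl : (0.5436890126:ℝ) ≤ y) (hyu : y ≤ 0.5436890127) :
    |Dd y 0 8| ≤ (9663/1000000 : ℝ) := by
  rw [Dd0_eq, Cv0_8, Lv8]
  push_cast; rw [abs_le]; constructor <;> nlinarith

lemma eps0_9 {y : ℝ} (hyl : (0.5436890126:ℝ) ≤ y) (hyu : y ≤ 0.5436890127) :
    |Dd y 0 9| ≤ (29211/1000000 : ℝ) := by
  rw [Dd0_eq, Cv0_9, Lv9]
  push_cast; rw [abs_le]; constructor <;> nlinarith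

lemma eps0_10 {y : ℝ} (hyl : (0.5436890126:ℝ) ≤ y) (hyu : y ≤ 0.5436890127) :
    |Dd y 0 10| ≤ (19263/1000000 : ℝ) := by
  rw [Dd0_eq, Cv0_10, Lv10]
  push_cast; rw [abs_le]; constructor <;> nlinarith

lemma eps0_11 {y : ℝ} (hyl : (0.5436890126:ℝ) ≤ y) (hyu : y ≤ 0.5436890127) :
    |Dd y 0 11| ≤ (143/500000 : ℝ) := by
  rw [Dd0_eq, Cv0_11, Lv11]
  push_cast; rw [abs_le]; constructor <;> nlinarith

lemma eps0_12 {y : ℝ} (hyl : (0.5436890126:ℝ) ≤ y) (hyu : y ≤ 0.5436890127) :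
    |Dd y 0 12| ≤ (5117/500000 : ℝ) := by
  rw [Dd0_eq, Cv0_12, Lv12]
  push_cast; rw [abs_le]; constructor <;> nlinarith

lemma eps0_13 {y : ℝ} (hyl : (0.5436890126:ℝ) ≤ y) (hyu : y ≤ 0.5436890127) :
    |Dd y 0 13| ≤ (1093/125000 : ℝ) := by
  rw [Dd0_eq, Cv0_13, Lv13]
  push_cast; rw [abs_le]; constructor <;> nlinarith

lemma eps0_14 {y : ℝ} (hyl : (0.5436890126:ℝ) ≤ y) (hyu : y ≤ 0.5436890127) :
    |Dd y 0 14| ≤ (111/62500 : ℝ) := by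
  rw [Dd0_eq, Cv0_14, Lv14]
  push_cast; rw [abs_le]; constructor <;> nlinarith

lemma eps0_15 {y : ℝ} (hyl : (0.5436890126:ℝ) ≤ y) (hyu : y ≤ 0.5436890127) :
    |Dd y 0 15| ≤ (1633/500000 : ℝ) := by
  rw [Dd0_eq, Cv0_15, Lv15]
  push_cast; rw [abs_le]; constructor <;> nlinarith

lemma eps0_16 {y : ℝ} (hyl : (0.5436890126:ℝ) ≤ y) (hyu : y ≤ 0.5436890127) :
    |Dd y 0 16| ≤ (741/200000 : ℝ) := by
  rw [Dd0_eq, Cv0_16, Lv16]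
  push_cast; rw [abs_le]; constructor <;> nlinarith

lemma eps0_17 {y : ℝ} (hyl : (0.5436890126:ℝ) ≤ y) (hyu : y ≤ 0.5436890127) :
    |Dd y 0 17| ≤ (669/500000 : ℝ) := by
  rw [Dd0_eq, Cv0_17, Lv17]
  push_cast; rw [abs_le]; constructor <;> nlinarith

lemma eps0_18 {y : ℝ} (hyl : (0.5436890126:ℝ) ≤ y) (hyu : y ≤ 0.5436890127) :
    |Dd y 0 18| ≤ (901/1000000 : ℝ) := by
  rw [Dd0_eq, Cv0_18, Lv18]
  push_cast; rw [abs_le]; constructor <;> nlinarith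

lemma eps0_19 {y : ℝ} (hyl : (0.5436890126:ℝ) ≤ y) (hyu : y ≤ 0.5436890127) :
    |Dd y 0 19| ≤ (1477/1000000 : ℝ) := by
  rw [Dd0_eq, Cv0_19, Lv19]
  push_cast; rw [abs_le]; constructor <;> nlinarith

set_option maxRecDepth 8000 in
lemma sum19_0 {y : ℝ} (hyl : (0.5436890126:ℝ) ≤ y) (hyu : y ≤ 0.5436890127) :
    Pp y 0 19 - Nn y 0 19 ≤ (617739/500000 : ℝ) := by
  have e0 := eps0_0 hyl hyu
  have e1 := eps0_1 hyl hyu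
  have e2 := eps0_2 hyl hyu
  have e3 := eps0_3 hyl hyu
  have e4 := eps0_4 hyl hyu
  have e5 := eps0_5 hyl hyu
  have e6 := eps0_6 hyl hyu
  have e7 := eps0_7 hyl hyu
  have e8 := eps0_8 hyl hyu
  have e9 := eps0_9 hyl hyu
  have e10 := eps0_10 hyl hyu
  have e11 := eps0_11 hyl hyu
  have e12 := eps0_12 hyl hyu
  have e13 := eps0_13 hyl hyu
  have e14 := eps0_14 hyl hyu
  have e15 := eps0_15 hyl hyu
  have e16 := eps0_16 hyl hyu
  have e17 := eps0_17 hyl hyu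
  have e18 := eps0_18 hyl hyu
  have e19 := eps0_19 hyl hyu
  have p0 := Pp_zero y 0
  have n0 := Nn_zero y 0
  have p1 := Pp_succ y 0 0
  have n1 := Nn_succ y 0 0
  have p2 := Pp_succ y 0 1
  have n2 := Nn_succ y 0 1
  have p3 := Pp_succ y 0 2
  have n3 := Nn_succ y 0 2
  have p4 := Pp_succ y 0 3
  have n4 := Nn_succ y 0 3
  have p5 := Pp_succ y 0 4
  have n5 := Nn_succ y 0 4
  have p6 := Pp_succ y 0 5
  have n6 := Nn_succ y 0 5
  have p7 := Pp_succ y 0 6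
  have n7 := Nn_succ y 0 6
  have p8 := Pp_succ y 0 7
  have n8 := Nn_succ y 0 7
  have p9 := Pp_succ y 0 8
  have n9 := Nn_succ y 0 8
  have p10 := Pp_succ y 0 9
  have n10 := Nn_succ y 0 9
  have p11 := Pp_succ y 0 10
  have n11 := Nn_succ y 0 10
  have p12 := Pp_succ y 0 11
  have n12 := Nn_succ y 0 11
  have p13 := Pp_succ y 0 12
  have n13 := Nn_succ y 0 12
  have p14 := Pp_succ y 0 13
  have n14 := Nn_succ y 0 13
  have p15 := Pp_succ y 0 14
  have n15 := Nn_succ y 0 14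
  have p16 := Pp_succ y 0 15
  have n16 := Nn_succ y 0 15
  have p17 := Pp_succ y 0 16
  have n17 := Nn_succ y 0 16
  have p18 := Pp_succ y 0 17
  have n18 := Nn_succ y 0 17
  have p19 := Pp_succ y 0 18
  have n19 := Nn_succ y 0 18
  have m0 : max (Dd y 0 0) 0 - min (Dd y 0 0) 0 = |Dd y 0 0| := by
    rw [max_sub_min_eq_abs, zero_sub, abs_neg]
  have m1 : max (Dd y 0 1) 0 - min (Dd y 0 1) 0 = |Dd y 0 1| := by
    rw [max_sub_min_eq_abs, zero_sub, abs_neg]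
  have m2 : max (Dd y 0 2) 0 - min (Dd y 0 2) 0 = |Dd y 0 2| := by
    rw [max_sub_min_eq_abs, zero_sub, abs_neg]
  have m3 : max (Dd y 0 3) 0 - min (Dd y 0 3) 0 = |Dd y 0 3| := by
    rw [max_sub_min_eq_abs, zero_sub, abs_neg]
  have m4 : max (Dd y 0 4) 0 - min (Dd y 0 4) 0 = |Dd y 0 4| := by
    rw [max_sub_min_eq_abs, zero_sub, abs_neg]
  have m5 : max (Dd y 0 5) 0 - min (Dd y 0 5) 0 = |Dd y 0 5| := by
    rw [max_sub_min_eq_abs, zero_sub, abs_neg]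
  have m6 : max (Dd y 0 6) 0 - min (Dd y 0 6) 0 = |Dd y 0 6| := by
    rw [max_sub_min_eq_abs, zero_sub, abs_neg]
  have m7 : max (Dd y 0 7) 0 - min (Dd y 0 7) 0 = |Dd y 0 7| := by
    rw [max_sub_min_eq_abs, zero_sub, abs_neg]
  have m8 : max (Dd y 0 8) 0 - min (Dd y 0 8) 0 = |Dd y 0 8| := by
    rw [max_sub_min_eq_abs, zero_sub, abs_neg]
  have m9 : max (Dd y 0 9) 0 - min (Dd y 0 9) 0 = |Dd y 0 9| := by
    rw [max_sub_min_eq_abs, zero_sub, abs_neg]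
  have m10 : max (Dd y 0 10) 0 - min (Dd y 0 10) 0 = |Dd y 0 10| := by
    rw [max_sub_min_eq_abs, zero_sub, abs_neg]
  have m11 : max (Dd y 0 11) 0 - min (Dd y 0 11) 0 = |Dd y 0 11| := by
    rw [max_sub_min_eq_abs, zero_sub, abs_neg]
  have m12 : max (Dd y 0 12) 0 - min (Dd y 0 12) 0 = |Dd y 0 12| := by
    rw [max_sub_min_eq_abs, zero_sub, abs_neg]
  have m13 : max (Dd y 0 13) 0 - min (Dd y 0 13) 0 = |Dd y 0 13| := by
    rw [max_sub_min_eq_abs, zero_sub, abs_neg]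
  have m14 : max (Dd y 0 14) 0 - min (Dd y 0 14) 0 = |Dd y 0 14| := by
    rw [max_sub_min_eq_abs, zero_sub, abs_neg]
  have m15 : max (Dd y 0 15) 0 - min (Dd y 0 15) 0 = |Dd y 0 15| := by
    rw [max_sub_min_eq_abs, zero_sub, abs_neg]
  have m16 : max (Dd y 0 16) 0 - min (Dd y 0 16) 0 = |Dd y 0 16| := by
    rw [max_sub_min_eq_abs, zero_sub, abs_neg]
  have m17 : max (Dd y 0 17) 0 - min (Dd y 0 17) 0 = |Dd y 0 17| := by
    rw [max_sub_min_eq_abs, zero_sub, abs_neg]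
  have m18 : max (Dd y 0 18) 0 - min (Dd y 0 18) 0 = |Dd y 0 18| := by
    rw [max_sub_min_eq_abs, zero_sub, abs_neg]
  have m19 : max (Dd y 0 19) 0 - min (Dd y 0 19) 0 = |Dd y 0 19| := by
    rw [max_sub_min_eq_abs, zero_sub, abs_neg]
  linarith [e0, e1, e2, e3, e4, e5, e6, e7, e8, e9, e10, e11, e12, e13, e14, e15, e16, e17, e18, e19, m0, m1, m2, m3, m4, m5, m6, m7, m8, m9, m10, m11, m12, m13, m14, m15, m16, m17, m18, m19]

lemma eps1_0 {y : ℝ} (hyl : (0.5436890126:ℝ) ≤ y) (hyu : y ≤ 0.5436890127) :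
    |Dd y 1 0| ≤ (147799/500000 : ℝ) := by
  have h2l : (0.2955977424:ℝ) ≤ y^2 := by nlinarith
  have h2u : y^2 ≤ 0.2955977426 := by nlinarith
  rw [Dd1_eq, Cv1_0, Lv0]
  push_cast; rw [abs_le]; constructor <;> nlinarith

lemma eps1_1 {y : ℝ} (hyl : (0.5436890126:ℝ) ≤ y) (hyu : y ≤ 0.5436890127) :
    |Dd y 1 1| ≤ (81761/200000 : ℝ) := by
  have h2l : (0.2955977424:ℝ) ≤ y^2 := by nlinarith
  have h2u : y^2 ≤ 0.2955977426 := by nlinarith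
  rw [Dd1_eq, Cv1_1, Lv1]
  push_cast; rw [abs_le]; constructor <;> nlinarith

lemma eps1_2 {y : ℝ} (hyl : (0.5436890126:ℝ) ≤ y) (hyu : y ≤ 0.5436890127) :
    |Dd y 1 2| ≤ (182391/1000000 : ℝ) := by
  have h2l : (0.2955977424:ℝ) ≤ y^2 := by nlinarith
  have h2u : y^2 ≤ 0.2955977426 := by nlinarith
  rw [Dd1_eq, Cv1_2, Lv2]
  push_cast; rw [abs_le]; constructor <;> nlinarith

lemma eps1_3 {y : ℝ} (hyl : (0.5436890126:ℝ) ≤ y) (hyu : y ≤ 0.5436890127) :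
    |Dd y 1 3| ≤ (13837/200000 : ℝ) := by
  have h2l : (0.2955977424:ℝ) ≤ y^2 := by nlinarith
  have h2u : y^2 ≤ 0.2955977426 := by nlinarith
  rw [Dd1_eq, Cv1_3, Lv3]
  push_cast; rw [abs_le]; constructor <;> nlinarith

lemma eps1_4 {y : ℝ} (hyl : (0.5436890126:ℝ) ≤ y) (hyu : y ≤ 0.5436890127) :
    |Dd y 1 4| ≤ (15723/100000 : ℝ) := by
  have h2l : (0.2955977424:ℝ) ≤ y^2 := by nlinarith
  have h2u : y^2 ≤ 0.2955977426 := by nlinarith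
  rw [Dd1_eq, Cv1_4, Lv4]
  push_cast; rw [abs_le]; constructor <;> nlinarith

lemma eps1_5 {y : ℝ} (hyl : (0.5436890126:ℝ) ≤ y) (hyu : y ≤ 0.5436890127) :
    |Dd y 1 5| ≤ (47173/500000 : ℝ) := by
  have h2l : (0.2955977424:ℝ) ≤ y^2 := by nlinarith
  have h2u : y^2 ≤ 0.2955977426 := by nlinarith
  rw [Dd1_eq, Cv1_5, Lv5]
  push_cast; rw [abs_le]; constructor <;> nlinarith

lemma eps1_6 {y : ℝ} (hyl : (0.5436890126:ℝ) ≤ y) (hyu : y ≤ 0.5436890127) :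
    |Dd y 1 6| ≤ (6301/1000000 : ℝ) := by
  have h2l : (0.2955977424:ℝ) ≤ y^2 := by nlinarith
  have h2u : y^2 ≤ 0.2955977426 := by nlinarith
  rw [Dd1_eq, Cv1_6, Lv6]
  push_cast; rw [abs_le]; constructor <;> nlinarith

lemma eps1_7 {y : ℝ} (hyl : (0.5436890126:ℝ) ≤ y) (hyu : y ≤ 0.5436890127) :
    |Dd y 1 7| ≤ (56583/1000000 : ℝ) := by
  have h2l : (0.2955977424:ℝ) ≤ y^2 := by nlinarith
  have h2u : y^2 ≤ 0.2955977426 := by nlinarith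
  rw [Dd1_eq, Cv1_7, Lv7]
  push_cast; rw [abs_le]; constructor <;> nlinarith

lemma eps1_8 {y : ℝ} (hyl : (0.5436890126:ℝ) ≤ y) (hyu : y ≤ 0.5436890127) :
    |Dd y 1 8| ≤ (1377/31250 : ℝ) := by
  have h2l : (0.2955977424:ℝ) ≤ y^2 := by nlinarith
  have h2u : y^2 ≤ 0.2955977426 := by nlinarith
  rw [Dd1_eq, Cv1_8, Lv8]
  push_cast; rw [abs_le]; constructor <;> nlinarith

lemma eps1_9 {y : ℝ} (hyl : (0.5436890126:ℝ) ≤ y) (hyu : y ≤ 0.5436890127) :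
    |Dd y 1 9| ≤ (6219/1000000 : ℝ) := by
  have h2l : (0.2955977424:ℝ) ≤ y^2 := by nlinarith
  have h2u : y^2 ≤ 0.2955977426 := by nlinarith
  rw [Dd1_eq, Cv1_9, Lv9]
  push_cast; rw [abs_le]; constructor <;> nlinarith

lemma eps1_10 {y : ℝ} (hyl : (0.5436890126:ℝ) ≤ y) (hyu : y ≤ 0.5436890127) :
    |Dd y 1 10| ≤ (9369/500000 : ℝ) := by
  have h2l : (0.2955977424:ℝ) ≤ y^2 := by nlinarith
  have h2u : y^2 ≤ 0.2955977426 := by nlinarith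
  rw [Dd1_eq, Cv1_10, Lv10]
  push_cast; rw [abs_le]; constructor <;> nlinarith

lemma eps1_11 {y : ℝ} (hyl : (0.5436890126:ℝ) ≤ y) (hyu : y ≤ 0.5436890127) :
    |Dd y 1 11| ≤ (4777/250000 : ℝ) := by
  have h2l : (0.2955977424:ℝ) ≤ y^2 := by nlinarith
  have h2u : y^2 ≤ 0.2955977426 := by nlinarith
  rw [Dd1_eq, Cv1_11, Lv11]
  push_cast; rw [abs_le]; constructor <;> nlinarith

lemma eps1_12 {y : ℝ} (hyl : (0.5436890126:ℝ) ≤ y) (hyu : y ≤ 0.5436890127) :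
    |Dd y 1 12| ≤ (117/20000 : ℝ) := by
  have h2l : (0.2955977424:ℝ) ≤ y^2 := by nlinarith
  have h2u : y^2 ≤ 0.2955977426 := by nlinarith
  rw [Dd1_eq, Cv1_12, Lv12]
  push_cast; rw [abs_le]; constructor <;> nlinarith

lemma eps1_13 {y : ℝ} (hyl : (0.5436890126:ℝ) ≤ y) (hyu : y ≤ 0.5436890127) :
    |Dd y 1 13| ≤ (137/25000 : ℝ) := by
  have h2l : (0.2955977424:ℝ) ≤ y^2 := by nlinarith
  have h2u : y^2 ≤ 0.2955977426 := by nlinarith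
  rw [Dd1_eq, Cv1_13, Lv13]
  push_cast; rw [abs_le]; constructor <;> nlinarith

lemma eps1_14 {y : ℝ} (hyl : (0.5436890126:ℝ) ≤ y) (hyu : y ≤ 0.5436890127) :
    |Dd y 1 14| ≤ (7779/1000000 : ℝ) := by
  have h2l : (0.2955977424:ℝ) ≤ y^2 := by nlinarith
  have h2u : y^2 ≤ 0.2955977426 := by nlinarith
  rw [Dd1_eq, Cv1_14, Lv14]
  push_cast; rw [abs_le]; constructor <;> nlinarith

lemma eps1_15 {y : ℝ} (hyl : (0.5436890126:ℝ) ≤ y) (hyu : y ≤ 0.5436890127) :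
    |Dd y 1 15| ≤ (3551/1000000 : ℝ) := by
  have h2l : (0.2955977424:ℝ) ≤ y^2 := by nlinarith
  have h2u : y^2 ≤ 0.2955977426 := by nlinarith
  rw [Dd1_eq, Cv1_15, Lv15]
  push_cast; rw [abs_le]; constructor <;> nlinarith

lemma eps1_16 {y : ℝ} (hyl : (0.5436890126:ℝ) ≤ y) (hyu : y ≤ 0.5436890127) :
    |Dd y 1 16| ≤ (1253/1000000 : ℝ) := by
  have h2l : (0.2955977424:ℝ) ≤ y^2 := by nlinarith
  have h2u : y^2 ≤ 0.2955977426 := by nlinarith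
  rw [Dd1_eq, Cv1_16, Lv16]
  push_cast; rw [abs_le]; constructor <;> nlinarith

lemma eps1_17 {y : ℝ} (hyl : (0.5436890126:ℝ) ≤ y) (hyu : y ≤ 0.5436890127) :
    |Dd y 1 17| ≤ (149/50000 : ℝ) := by
  have h2l : (0.2955977424:ℝ) ≤ y^2 := by nlinarith
  have h2u : y^2 ≤ 0.2955977426 := by nlinarith
  rw [Dd1_eq, Cv1_17, Lv17]
  push_cast; rw [abs_le]; constructor <;> nlinarith

lemma eps1_18 {y : ℝ} (hyl : (0.5436890126:ℝ) ≤ y) (hyu : y ≤ 0.5436890127) :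
    |Dd y 1 18| ≤ (457/250000 : ℝ) := by
  have h2l : (0.2955977424:ℝ) ≤ y^2 := by nlinarith
  have h2u : y^2 ≤ 0.2955977426 := by nlinarith
  rw [Dd1_eq, Cv1_18, Lv18]
  push_cast; rw [abs_le]; constructor <;> nlinarith

lemma eps1_19 {y : ℝ} (hyl : (0.5436890126:ℝ) ≤ y) (hyu : y ≤ 0.5436890127) :
    |Dd y 1 19| ≤ (13/125000 : ℝ) := by
  have h2l : (0.2955977424:ℝ) ≤ y^2 := by nlinarith
  have h2u : y^2 ≤ 0.2955977426 := by nlinarith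
  rw [Dd1_eq, Cv1_19, Lv19]
  push_cast; rw [abs_le]; constructor <;> nlinarith

set_option maxRecDepth 8000 in
lemma sum19_1 {y : ℝ} (hyl : (0.5436890126:ℝ) ≤ y) (hyu : y ≤ 0.5436890127) :
    Pp y 1 19 - Nn y 1 19 ≤ (1387393/1000000 : ℝ) := by
  have e0 := eps1_0 hyl hyu
  have e1 := eps1_1 hyl hyu
  have e2 := eps1_2 hyl hyu
  have e3 := eps1_3 hyl hyu
  have e4 := eps1_4 hyl hyu
  have e5 := eps1_5 hyl hyu
  have e6 := eps1_6 hyl hyu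
  have e7 := eps1_7 hyl hyu
  have e8 := eps1_8 hyl hyu
  have e9 := eps1_9 hyl hyu
  have e10 := eps1_10 hyl hyu
  have e11 := eps1_11 hyl hyu
  have e12 := eps1_12 hyl hyu
  have e13 := eps1_13 hyl hyu
  have e14 := eps1_14 hyl hyu
  have e15 := eps1_15 hyl hyu
  have e16 := eps1_16 hyl hyu
  have e17 := eps1_17 hyl hyu
  have e18 := eps1_18 hyl hyu
  have e19 := eps1_19 hyl hyu
  have p0 := Pp_zero y 1
  have n0 := Nn_zero y 1
  have p1 := Pp_succ y 1 0
  have n1 := Nn_succ y 1 0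
  have p2 := Pp_succ y 1 1
  have n2 := Nn_succ y 1 1
  have p3 := Pp_succ y 1 2
  have n3 := Nn_succ y 1 2
  have p4 := Pp_succ y 1 3
  have n4 := Nn_succ y 1 3
  have p5 := Pp_succ y 1 4
  have n5 := Nn_succ y 1 4
  have p6 := Pp_succ y 1 5
  have n6 := Nn_succ y 1 5
  have p7 := Pp_succ y 1 6
  have n7 := Nn_succ y 1 6
  have p8 := Pp_succ y 1 7
  have n8 := Nn_succ y 1 7
  have p9 := Pp_succ y 1 8
  have n9 := Nn_succ y 1 8
  have p10 := Pp_succ y 1 9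
  have n10 := Nn_succ y 1 9
  have p11 := Pp_succ y 1 10
  have n11 := Nn_succ y 1 10
  have p12 := Pp_succ y 1 11
  have n12 := Nn_succ y 1 11
  have p13 := Pp_succ y 1 12
  have n13 := Nn_succ y 1 12
  have p14 := Pp_succ y 1 13
  have n14 := Nn_succ y 1 13
  have p15 := Pp_succ y 1 14
  have n15 := Nn_succ y 1 14
  have p16 := Pp_succ y 1 15
  have n16 := Nn_succ y 1 15
  have p17 := Pp_succ y 1 16
  have n17 := Nn_succ y 1 16
  have p18 := Pp_succ y 1 17
  have n18 := Nn_succ y 1 17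
  have p19 := Pp_succ y 1 18
  have n19 := Nn_succ y 1 18
  have m0 : max (Dd y 1 0) 0 - min (Dd y 1 0) 0 = |Dd y 1 0| := by
    rw [max_sub_min_eq_abs, zero_sub, abs_neg]
  have m1 : max (Dd y 1 1) 0 - min (Dd y 1 1) 0 = |Dd y 1 1| := by
    rw [max_sub_min_eq_abs, zero_sub, abs_neg]
  have m2 : max (Dd y 1 2) 0 - min (Dd y 1 2) 0 = |Dd y 1 2| := by
    rw [max_sub_min_eq_abs, zero_sub, abs_neg]
  have m3 : max (Dd y 1 3) 0 - min (Dd y 1 3) 0 = |Dd y 1 3| := by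
    rw [max_sub_min_eq_abs, zero_sub, abs_neg]
  have m4 : max (Dd y 1 4) 0 - min (Dd y 1 4) 0 = |Dd y 1 4| := by
    rw [max_sub_min_eq_abs, zero_sub, abs_neg]
  have m5 : max (Dd y 1 5) 0 - min (Dd y 1 5) 0 = |Dd y 1 5| := by
    rw [max_sub_min_eq_abs, zero_sub, abs_neg]
  have m6 : max (Dd y 1 6) 0 - min (Dd y 1 6) 0 = |Dd y 1 6| := by
    rw [max_sub_min_eq_abs, zero_sub, abs_neg]
  have m7 : max (Dd y 1 7) 0 - min (Dd y 1 7) 0 = |Dd y 1 7| := by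
    rw [max_sub_min_eq_abs, zero_sub, abs_neg]
  have m8 : max (Dd y 1 8) 0 - min (Dd y 1 8) 0 = |Dd y 1 8| := by
    rw [max_sub_min_eq_abs, zero_sub, abs_neg]
  have m9 : max (Dd y 1 9) 0 - min (Dd y 1 9) 0 = |Dd y 1 9| := by
    rw [max_sub_min_eq_abs, zero_sub, abs_neg]
  have m10 : max (Dd y 1 10) 0 - min (Dd y 1 10) 0 = |Dd y 1 10| := by
    rw [max_sub_min_eq_abs, zero_sub, abs_neg]
  have m11 : max (Dd y 1 11) 0 - min (Dd y 1 11) 0 = |Dd y 1 11| := by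
    rw [max_sub_min_eq_abs, zero_sub, abs_neg]
  have m12 : max (Dd y 1 12) 0 - min (Dd y 1 12) 0 = |Dd y 1 12| := by
    rw [max_sub_min_eq_abs, zero_sub, abs_neg]
  have m13 : max (Dd y 1 13) 0 - min (Dd y 1 13) 0 = |Dd y 1 13| := by
    rw [max_sub_min_eq_abs, zero_sub, abs_neg]
  have m14 : max (Dd y 1 14) 0 - min (Dd y 1 14) 0 = |Dd y 1 14| := by
    rw [max_sub_min_eq_abs, zero_sub, abs_neg]
  have m15 : max (Dd y 1 15) 0 - min (Dd y 1 15) 0 = |Dd y 1 15| := by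
    rw [max_sub_min_eq_abs, zero_sub, abs_neg]
  have m16 : max (Dd y 1 16) 0 - min (Dd y 1 16) 0 = |Dd y 1 16| := by
    rw [max_sub_min_eq_abs, zero_sub, abs_neg]
  have m17 : max (Dd y 1 17) 0 - min (Dd y 1 17) 0 = |Dd y 1 17| := by
    rw [max_sub_min_eq_abs, zero_sub, abs_neg]
  have m18 : max (Dd y 1 18) 0 - min (Dd y 1 18) 0 = |Dd y 1 18| := by
    rw [max_sub_min_eq_abs, zero_sub, abs_neg]
  have m19 : max (Dd y 1 19) 0 - min (Dd y 1 19) 0 = |Dd y 1 19| := by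
    rw [max_sub_min_eq_abs, zero_sub, abs_neg]
  linarith [e0, e1, e2, e3, e4, e5, e6, e7, e8, e9, e10, e11, e12, e13, e14, e15, e16, e17, e18, e19, m0, m1, m2, m3, m4, m5, m6, m7, m8, m9, m10, m11, m12, m13, m14, m15, m16, m17, m18, m19]

lemma eps2_0 {y : ℝ} (hyl : (0.5436890126:ℝ) ≤ y) (hyu : y ≤ 0.5436890127) :
    |Dd y 2 0| ≤ (80357/500000 : ℝ) := by
  have h2l : (0.2955977424:ℝ) ≤ y^2 := by nlinarith
  have h2u : y^2 ≤ 0.2955977426 := by nlinarith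
  have h3l : (0.1607132447:ℝ) ≤ y^3 := by nlinarith
  have h3u : y^3 ≤ 0.1607132448 := by nlinarith
  rw [Dd2_eq, Cv2_0, Lv0]
  push_cast; rw [abs_le]; constructor <;> nlinarith

lemma eps2_1 {y : ℝ} (hyl : (0.5436890126:ℝ) ≤ y) (hyu : y ≤ 0.5436890127) :
    |Dd y 2 1| ≤ (321427/1000000 : ℝ) := by
  have h2l : (0.2955977424:ℝ) ≤ y^2 := by nlinarith
  have h2u : y^2 ≤ 0.2955977426 := by nlinarith
  have h3l : (0.1607132447:ℝ) ≤ y^3 := by nlinarith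
  have h3u : y^3 ≤ 0.1607132448 := by nlinarith
  rw [Dd2_eq, Cv2_1, Lv1]
  push_cast; rw [abs_le]; constructor <;> nlinarith

lemma eps2_2 {y : ℝ} (hyl : (0.5436890126:ℝ) ≤ y) (hyu : y ≤ 0.5436890127) :
    |Dd y 2 2| ≤ (89287/250000 : ℝ) := by
  have h2l : (0.2955977424:ℝ) ≤ y^2 := by nlinarith
  have h2u : y^2 ≤ 0.2955977426 := by nlinarith
  have h3l : (0.1607132447:ℝ) ≤ y^3 := by nlinarith
  have h3u : y^3 ≤ 0.1607132448 := by nlinarith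
  rw [Dd2_eq, Cv2_2, Lv2]
  push_cast; rw [abs_le]; constructor <;> nlinarith

lemma eps2_3 {y : ℝ} (hyl : (0.5436890126:ℝ) ≤ y) (hyu : y ≤ 0.5436890127) :
    |Dd y 2 3| ≤ (124993/1000000 : ℝ) := by
  have h2l : (0.2955977424:ℝ) ≤ y^2 := by nlinarith
  have h2u : y^2 ≤ 0.2955977426 := by nlinarith
  have h3l : (0.1607132447:ℝ) ≤ y^3 := by nlinarith
  have h3u : y^3 ≤ 0.1607132448 := by nlinarith
  rw [Dd2_eq, Cv2_3, Lv3]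
  push_cast; rw [abs_le]; constructor <;> nlinarith

lemma eps2_4 {y : ℝ} (hyl : (0.5436890126:ℝ) ≤ y) (hyu : y ≤ 0.5436890127) :
    |Dd y 2 4| ≤ (89273/1000000 : ℝ) := by
  have h2l : (0.2955977424:ℝ) ≤ y^2 := by nlinarith
  have h2u : y^2 ≤ 0.2955977426 := by nlinarith
  have h3l : (0.1607132447:ℝ) ≤ y^3 := by nlinarith
  have h3u : y^3 ≤ 0.1607132448 := by nlinarith
  rw [Dd2_eq, Cv2_4, Lv4]
  push_cast; rw [abs_le]; constructor <;> nlinarith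

lemma eps2_5 {y : ℝ} (hyl : (0.5436890126:ℝ) ≤ y) (hyu : y ≤ 0.5436890127) :
    |Dd y 2 5| ≤ (142883/1000000 : ℝ) := by
  have h2l : (0.2955977424:ℝ) ≤ y^2 := by nlinarith
  have h2u : y^2 ≤ 0.2955977426 := by nlinarith
  have h3l : (0.1607132447:ℝ) ≤ y^3 := by nlinarith
  have h3u : y^3 ≤ 0.1607132448 := by nlinarith
  rw [Dd2_eq, Cv2_5, Lv5]
  push_cast; rw [abs_le]; constructor <;> nlinarith

lemma eps2_6 {y : ℝ} (hyl : (0.5436890126:ℝ) ≤ y) (hyu : y ≤ 0.5436890127) :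
    |Dd y 2 6| ≤ (71383/1000000 : ℝ) := by
  have h2l : (0.2955977424:ℝ) ≤ y^2 := by nlinarith
  have h2u : y^2 ≤ 0.2955977426 := by nlinarith
  have h3l : (0.1607132447:ℝ) ≤ y^3 := by nlinarith
  have h3u : y^3 ≤ 0.1607132448 := by nlinarith
  rw [Dd2_eq, Cv2_6, Lv6]
  push_cast; rw [abs_le]; constructor <;> nlinarith

lemma eps2_7 {y : ℝ} (hyl : (0.5436890126:ℝ) ≤ y) (hyu : y ≤ 0.5436890127) :
    |Dd y 2 7| ≤ (17773/1000000 : ℝ) := by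
  have h2l : (0.2955977424:ℝ) ≤ y^2 := by nlinarith
  have h2u : y^2 ≤ 0.2955977426 := by nlinarith
  have h3l : (0.1607132447:ℝ) ≤ y^3 := by nlinarith
  have h3u : y^3 ≤ 0.1607132448 := by nlinarith
  rw [Dd2_eq, Cv2_7, Lv7]
  push_cast; rw [abs_le]; constructor <;> nlinarith

lemma eps2_8 {y : ℝ} (hyl : (0.5436890126:ℝ) ≤ y) (hyu : y ≤ 0.5436890127) :
    |Dd y 2 8| ≤ (53727/1000000 : ℝ) := by
  have h2l : (0.2955977424:ℝ) ≤ y^2 := by nlinarith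
  have h2u : y^2 ≤ 0.2955977426 := by nlinarith
  have h3l : (0.1607132447:ℝ) ≤ y^3 := by nlinarith
  have h3u : y^3 ≤ 0.1607132448 := by nlinarith
  rw [Dd2_eq, Cv2_8, Lv8]
  push_cast; rw [abs_le]; constructor <;> nlinarith

lemma eps2_9 {y : ℝ} (hyl : (0.5436890126:ℝ) ≤ y) (hyu : y ≤ 0.5436890127) :
    |Dd y 2 9| ≤ (3543/100000 : ℝ) := by
  have h2l : (0.2955977424:ℝ) ≤ y^2 := by nlinarith
  have h2u : y^2 ≤ 0.2955977426 := by nlinarith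
  have h3l : (0.1607132447:ℝ) ≤ y^3 := by nlinarith
  have h3u : y^3 ≤ 0.1607132448 := by nlinarith
  rw [Dd2_eq, Cv2_9, Lv9]
  push_cast; rw [abs_le]; constructor <;> nlinarith

lemma eps2_10 {y : ℝ} (hyl : (0.5436890126:ℝ) ≤ y) (hyu : y ≤ 0.5436890127) :
    |Dd y 2 10| ≤ (21/40000 : ℝ) := by
  have h2l : (0.2955977424:ℝ) ≤ y^2 := by nlinarith
  have h2u : y^2 ≤ 0.2955977426 := by nlinarith
  have h3l : (0.1607132447:ℝ) ≤ y^3 := by nlinarith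
  have h3u : y^3 ≤ 0.1607132448 := by nlinarith
  rw [Dd2_eq, Cv2_10, Lv10]
  push_cast; rw [abs_le]; constructor <;> nlinarith

lemma eps2_11 {y : ℝ} (hyl : (0.5436890126:ℝ) ≤ y) (hyu : y ≤ 0.5436890127) :
    |Dd y 2 11| ≤ (18823/1000000 : ℝ) := by
  have h2l : (0.2955977424:ℝ) ≤ y^2 := by nlinarith
  have h2u : y^2 ≤ 0.2955977426 := by nlinarith
  have h3l : (0.1607132447:ℝ) ≤ y^3 := by nlinarith
  have h3u : y^3 ≤ 0.1607132448 := by nlinarith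
  rw [Dd2_eq, Cv2_11, Lv11]
  push_cast; rw [abs_le]; constructor <;> nlinarith

lemma eps2_12 {y : ℝ} (hyl : (0.5436890126:ℝ) ≤ y) (hyu : y ≤ 0.5436890127) :
    |Dd y 2 12| ≤ (16083/1000000 : ℝ) := by
  have h2l : (0.2955977424:ℝ) ≤ y^2 := by nlinarith
  have h2u : y^2 ≤ 0.2955977426 := by nlinarith
  have h3l : (0.1607132447:ℝ) ≤ y^3 := by nlinarith
  have h3u : y^3 ≤ 0.1607132448 := by nlinarith
  rw [Dd2_eq, Cv2_12, Lv12]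
  push_cast; rw [abs_le]; constructor <;> nlinarith

lemma eps2_13 {y : ℝ} (hyl : (0.5436890126:ℝ) ≤ y) (hyu : y ≤ 0.5436890127) :
    |Dd y 2 13| ≤ (653/200000 : ℝ) := by
  have h2l : (0.2955977424:ℝ) ≤ y^2 := by nlinarith
  have h2u : y^2 ≤ 0.2955977426 := by nlinarith
  have h3l : (0.1607132447:ℝ) ≤ y^3 := by nlinarith
  have h3u : y^3 ≤ 0.1607132448 := by nlinarith
  rw [Dd2_eq, Cv2_13, Lv13]
  push_cast; rw [abs_le]; constructor <;> nlinarith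

lemma eps2_14 {y : ℝ} (hyl : (0.5436890126:ℝ) ≤ y) (hyu : y ≤ 0.5436890127) :
    |Dd y 2 14| ≤ (1201/200000 : ℝ) := by
  have h2l : (0.2955977424:ℝ) ≤ y^2 := by nlinarith
  have h2u : y^2 ≤ 0.2955977426 := by nlinarith
  have h3l : (0.1607132447:ℝ) ≤ y^3 := by nlinarith
  have h3u : y^3 ≤ 0.1607132448 := by nlinarith
  rw [Dd2_eq, Cv2_14, Lv14]
  push_cast; rw [abs_le]; constructor <;> nlinarith

lemma eps2_15 {y : ℝ} (hyl : (0.5436890126:ℝ) ≤ y) (hyu : y ≤ 0.5436890127) :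
    |Dd y 2 15| ≤ (1363/200000 : ℝ) := by
  have h2l : (0.2955977424:ℝ) ≤ y^2 := by nlinarith
  have h2u : y^2 ≤ 0.2955977426 := by nlinarith
  have h3l : (0.1607132447:ℝ) ≤ y^3 := by nlinarith
  have h3u : y^3 ≤ 0.1607132448 := by nlinarith
  rw [Dd2_eq, Cv2_15, Lv15]
  push_cast; rw [abs_le]; constructor <;> nlinarith

lemma eps2_16 {y : ℝ} (hyl : (0.5436890126:ℝ) ≤ y) (hyu : y ≤ 0.5436890127) :
    |Dd y 2 16| ≤ (2457/1000000 : ℝ) := by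
  have h2l : (0.2955977424:ℝ) ≤ y^2 := by nlinarith
  have h2u : y^2 ≤ 0.2955977426 := by nlinarith
  have h3l : (0.1607132447:ℝ) ≤ y^3 := by nlinarith
  have h3u : y^3 ≤ 0.1607132448 := by nlinarith
  rw [Dd2_eq, Cv2_16, Lv16]
  push_cast; rw [abs_le]; constructor <;> nlinarith

lemma eps2_17 {y : ℝ} (hyl : (0.5436890126:ℝ) ≤ y) (hyu : y ≤ 0.5436890127) :
    |Dd y 2 17| ≤ (103/62500 : ℝ) := by
  have h2l : (0.2955977424:ℝ) ≤ y^2 := by nlinarith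
  have h2u : y^2 ≤ 0.2955977426 := by nlinarith
  have h3l : (0.1607132447:ℝ) ≤ y^3 := by nlinarith
  have h3u : y^3 ≤ 0.1607132448 := by nlinarith
  rw [Dd2_eq, Cv2_17, Lv17]
  push_cast; rw [abs_le]; constructor <;> nlinarith

lemma eps2_18 {y : ℝ} (hyl : (0.5436890126:ℝ) ≤ y) (hyu : y ≤ 0.5436890127) :
    |Dd y 2 18| ≤ (679/250000 : ℝ) := by
  have h2l : (0.2955977424:ℝ) ≤ y^2 := by nlinarith
  have h2u : y^2 ≤ 0.2955977426 := by nlinarith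
  have h3l : (0.1607132447:ℝ) ≤ y^3 := by nlinarith
  have h3u : y^3 ≤ 0.1607132448 := by nlinarith
  rw [Dd2_eq, Cv2_18, Lv18]
  push_cast; rw [abs_le]; constructor <;> nlinarith

lemma eps2_19 {y : ℝ} (hyl : (0.5436890126:ℝ) ≤ y) (hyu : y ≤ 0.5436890127) :
    |Dd y 2 19| ≤ (279/200000 : ℝ) := by
  have h2l : (0.2955977424:ℝ) ≤ y^2 := by nlinarith
  have h2u : y^2 ≤ 0.2955977426 := by nlinarith
  have h3l : (0.1607132447:ℝ) ≤ y^3 := by nlinarith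
  have h3u : y^3 ≤ 0.1607132448 := by nlinarith
  rw [Dd2_eq, Cv2_19, Lv19]
  push_cast; rw [abs_le]; constructor <;> nlinarith

set_option maxRecDepth 8000 in
lemma sum19_2 {y : ℝ} (hyl : (0.5436890126:ℝ) ≤ y) (hyu : y ≤ 0.5436890127) :
    Pp y 2 19 - Nn y 2 19 ≤ (1434483/1000000 : ℝ) := by
  have e0 := eps2_0 hyl hyu
  have e1 := eps2_1 hyl hyu
  have e2 := eps2_2 hyl hyu
  have e3 := eps2_3 hyl hyu
  have e4 := eps2_4 hyl hyu
  have e5 := eps2_5 hyl hyu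
  have e6 := eps2_6 hyl hyu
  have e7 := eps2_7 hyl hyu
  have e8 := eps2_8 hyl hyu
  have e9 := eps2_9 hyl hyu
  have e10 := eps2_10 hyl hyu
  have e11 := eps2_11 hyl hyu
  have e12 := eps2_12 hyl hyu
  have e13 := eps2_13 hyl hyu
  have e14 := eps2_14 hyl hyu
  have e15 := eps2_15 hyl hyu
  have e16 := eps2_16 hyl hyu
  have e17 := eps2_17 hyl hyu
  have e18 := eps2_18 hyl hyu
  have e19 := eps2_19 hyl hyu
  have p0 := Pp_zero y 2
  have n0 := Nn_zero y 2
  have p1 := Pp_succ y 2 0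
  have n1 := Nn_succ y 2 0
  have p2 := Pp_succ y 2 1
  have n2 := Nn_succ y 2 1
  have p3 := Pp_succ y 2 2
  have n3 := Nn_succ y 2 2
  have p4 := Pp_succ y 2 3
  have n4 := Nn_succ y 2 3
  have p5 := Pp_succ y 2 4
  have n5 := Nn_succ y 2 4
  have p6 := Pp_succ y 2 5
  have n6 := Nn_succ y 2 5
  have p7 := Pp_succ y 2 6
  have n7 := Nn_succ y 2 6
  have p8 := Pp_succ y 2 7
  have n8 := Nn_succ y 2 7
  have p9 := Pp_succ y 2 8
  have n9 := Nn_succ y 2 8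
  have p10 := Pp_succ y 2 9
  have n10 := Nn_succ y 2 9
  have p11 := Pp_succ y 2 10
  have n11 := Nn_succ y 2 10
  have p12 := Pp_succ y 2 11
  have n12 := Nn_succ y 2 11
  have p13 := Pp_succ y 2 12
  have n13 := Nn_succ y 2 12
  have p14 := Pp_succ y 2 13
  have n14 := Nn_succ y 2 13
  have p15 := Pp_succ y 2 14
  have n15 := Nn_succ y 2 14
  have p16 := Pp_succ y 2 15
  have n16 := Nn_succ y 2 15
  have p17 := Pp_succ y 2 16
  have n17 := Nn_succ y 2 16
  have p18 := Pp_succ y 2 17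
  have n18 := Nn_succ y 2 17
  have p19 := Pp_succ y 2 18
  have n19 := Nn_succ y 2 18
  have m0 : max (Dd y 2 0) 0 - min (Dd y 2 0) 0 = |Dd y 2 0| := by
    rw [max_sub_min_eq_abs, zero_sub, abs_neg]
  have m1 : max (Dd y 2 1) 0 - min (Dd y 2 1) 0 = |Dd y 2 1| := by
    rw [max_sub_min_eq_abs, zero_sub, abs_neg]
  have m2 : max (Dd y 2 2) 0 - min (Dd y 2 2) 0 = |Dd y 2 2| := by
    rw [max_sub_min_eq_abs, zero_sub, abs_neg]
  have m3 : max (Dd y 2 3) 0 - min (Dd y 2 3) 0 = |Dd y 2 3| := by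
    rw [max_sub_min_eq_abs, zero_sub, abs_neg]
  have m4 : max (Dd y 2 4) 0 - min (Dd y 2 4) 0 = |Dd y 2 4| := by
    rw [max_sub_min_eq_abs, zero_sub, abs_neg]
  have m5 : max (Dd y 2 5) 0 - min (Dd y 2 5) 0 = |Dd y 2 5| := by
    rw [max_sub_min_eq_abs, zero_sub, abs_neg]
  have m6 : max (Dd y 2 6) 0 - min (Dd y 2 6) 0 = |Dd y 2 6| := by
    rw [max_sub_min_eq_abs, zero_sub, abs_neg]
  have m7 : max (Dd y 2 7) 0 - min (Dd y 2 7) 0 = |Dd y 2 7| := by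
    rw [max_sub_min_eq_abs, zero_sub, abs_neg]
  have m8 : max (Dd y 2 8) 0 - min (Dd y 2 8) 0 = |Dd y 2 8| := by
    rw [max_sub_min_eq_abs, zero_sub, abs_neg]
  have m9 : max (Dd y 2 9) 0 - min (Dd y 2 9) 0 = |Dd y 2 9| := by
    rw [max_sub_min_eq_abs, zero_sub, abs_neg]
  have m10 : max (Dd y 2 10) 0 - min (Dd y 2 10) 0 = |Dd y 2 10| := by
    rw [max_sub_min_eq_abs, zero_sub, abs_neg]
  have m11 : max (Dd y 2 11) 0 - min (Dd y 2 11) 0 = |Dd y 2 11| := by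
    rw [max_sub_min_eq_abs, zero_sub, abs_neg]
  have m12 : max (Dd y 2 12) 0 - min (Dd y 2 12) 0 = |Dd y 2 12| := by
    rw [max_sub_min_eq_abs, zero_sub, abs_neg]
  have m13 : max (Dd y 2 13) 0 - min (Dd y 2 13) 0 = |Dd y 2 13| := by
    rw [max_sub_min_eq_abs, zero_sub, abs_neg]
  have m14 : max (Dd y 2 14) 0 - min (Dd y 2 14) 0 = |Dd y 2 14| := by
    rw [max_sub_min_eq_abs, zero_sub, abs_neg]
  have m15 : max (Dd y 2 15) 0 - min (Dd y 2 15) 0 = |Dd y 2 15| := by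
    rw [max_sub_min_eq_abs, zero_sub, abs_neg]
  have m16 : max (Dd y 2 16) 0 - min (Dd y 2 16) 0 = |Dd y 2 16| := by
    rw [max_sub_min_eq_abs, zero_sub, abs_neg]
  have m17 : max (Dd y 2 17) 0 - min (Dd y 2 17) 0 = |Dd y 2 17| := by
    rw [max_sub_min_eq_abs, zero_sub, abs_neg]
  have m18 : max (Dd y 2 18) 0 - min (Dd y 2 18) 0 = |Dd y 2 18| := by
    rw [max_sub_min_eq_abs, zero_sub, abs_neg]
  have m19 : max (Dd y 2 19) 0 - min (Dd y 2 19) 0 = |Dd y 2 19| := by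
    rw [max_sub_min_eq_abs, zero_sub, abs_neg]
  linarith [e0, e1, e2, e3, e4, e5, e6, e7, e8, e9, e10, e11, e12, e13, e14, e15, e16, e17, e18, e19, m0, m1, m2, m3, m4, m5, m6, m7, m8, m9, m10, m11, m12, m13, m14, m15, m16, m17, m18, m19]

end TB
namespace TB

lemma spread {y : ℝ} (hyl : (0.5436890126:ℝ) ≤ y) (hyu : y ≤ 0.5436890127) (a : Fin 3) :
    (Pp y a 19 + Mv a * 4 * (3/4:ℝ)^20) - (Nn y a 19 - Mv a * 4 * (3/4:ℝ)^20) < 3/2 := by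
  have hp : (3/4:ℝ)^20 = 3486784401/1099511627776 := by norm_num
  fin_cases a
  · have s := sum19_0 hyl hyu
    show Pp y 0 19 + Mv 0 * 4 * (3/4:ℝ)^20 - (Nn y 0 19 - Mv 0 * 4 * (3/4:ℝ)^20) < 3/2
    rw [hp, show Mv 0 = 1/2 from by norm_num [Mv]]
    linarith
  · have s := sum19_1 hyl hyu
    show Pp y 1 19 + Mv 1 * 4 * (3/4:ℝ)^20 - (Nn y 1 19 - Mv 1 * 4 * (3/4:ℝ)^20) < 3/2
    rw [hp, show Mv 1 = 14/25 from by norm_num [Mv]]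
    linarith
  · have s := sum19_2 hyl hyu
    show Pp y 2 19 + Mv 2 * 4 * (3/4:ℝ)^20 - (Nn y 2 19 - Mv 2 * 4 * (3/4:ℝ)^20) < 3/2
    rw [hp, show Mv 2 = 67/100 from by simp [Mv]]
    linarith

lemma gg_def (y : ℝ) (a : Fin 3) (n : ℕ) :
    gg y a n = ((pref n).count a : ℝ) - (n : ℝ) * y^((a:ℕ)+1) := rfl

lemma L_def (k : ℕ) : L k = (tribPrefix k).length := by
  with_unfolding_all rfl

lemma factor_take (t : ℕ → Fin 3) (n N : ℕ) (h : n ≤ N) :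
    factor t 0 n = (factor t 0 N).take n := by
  unfold factor
  rw [← List.map_take, List.take_range, min_eq_left h]

lemma factor_eq_pref (t : ℕ → Fin 3)
    (ht : ∀ k : ℕ, factor t 0 (tribPrefix k).length = tribPrefix k) (n : ℕ) :
    factor t 0 n = pref n := by
  have h1 : factor t 0 (L n) = tribPrefix n := by rw [L_def]; exact ht n
  have h2 : n ≤ L n := by have := L_ge n; omega
  rw [factor_take t n (L n) h2, h1]
  rfl

lemma factor_append (t : ℕ → Fin 3) (i n : ℕ) :
    factor t 0 (i+n) = factor t 0 i ++ factor t i n := by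
  unfold factor
  rw [List.range_add, List.map_append, List.map_map]
  congr 1
  apply List.map_congr_left
  intro x _
  simp [Function.comp]

end TB

/-- The Tribonacci word is `2`-balanced. -/
theorem tribonacci_two_balanced (t : ℕ → Fin 3)
    (ht : ∀ k : ℕ, factor t 0 (tribPrefix k).length = tribPrefix k) :
    IsCBalanced t 2 := by
  obtain ⟨y, hy, hyl, hyu⟩ := TB.exists_y
  intro a n i j
  have hcnt : ∀ m k : ℕ, ((factor t m k).count a : ℝ)
      = TB.gg y a (m+k) - TB.gg y a m + (k:ℝ) * y^((a:ℕ)+1) := by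
    intro m k
    have h1 : (TB.pref (m+k)).count a = (TB.pref m).count a + (factor t m k).count a := by
      rw [← TB.factor_eq_pref t ht, ← TB.factor_eq_pref t ht, TB.factor_append t m k,
        List.count_append]
    have h2 : ((TB.pref (m+k)).count a : ℝ)
        = ((TB.pref m).count a : ℝ) + ((factor t m k).count a : ℝ) := by exact_mod_cast h1
    rw [TB.gg_def, TB.gg_def, h2]
    push_cast
    ring
  have hUn := hcnt i n
  have hVn := hcnt j n
  obtain ⟨b1, b2⟩ := TB.gg_global hy hyl hyu a (i+n)
  obtain ⟨b3, b4⟩ := TB.gg_global hy hyl hyu a i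
  obtain ⟨b5, b6⟩ := TB.gg_global hy hyl hyu a (j+n)
  obtain ⟨b7, b8⟩ := TB.gg_global hy hyl hyu a j
  have hsp := TB.spread hyl hyu a
  have hZ : ((((factor t i n).count a : ℤ) - ((factor t j n).count a : ℤ) : ℤ) : ℝ)
      = (TB.gg y a (i+n) - TB.gg y a i) - (TB.gg y a (j+n) - TB.gg y a j) := by
    push_cast
    rw [hUn, hVn]
    ring
  have habs : |((((factor t i n).count a : ℤ) - ((factor t j n).count a : ℤ) : ℤ) : ℝ)| < 3 := by
    rw [abs_lt]
    constructor <;> rw [hZ] <;> linarith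
  rw [← Int.cast_abs] at habs
  have habs' : |((factor t i n).count a : ℤ) - ((factor t j n).count a : ℤ)| < 3 := by
    exact_mod_cast habs
  have : ((2:ℕ) : ℤ) = 2 := rfl
  omega
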